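/- Let p > 3 be a prime. Then Ω_1^p = {1, -2, -2⁻¹} and this set has cardinality 3; moreover, for any k ∈ ℤ/pℤ with k ≠ 0 and k ≠ -1, the set Ω_k^p has cardinality 3 if and only if Ω_k^p = Ω_1^p. -/

import Mathlib

/-- `Ω_k^p := {k, -1-k, k⁻¹, -1-k⁻¹, -(k+1)⁻¹, (k+1)⁻¹ - 1} ⊆ ℤ/pℤ`. -/
def Omega (p : ℕ) (k : ZMod p) : Finset (ZMod p) :=
  {k, -1 - k, k⁻¹, -1 - k⁻¹, -(k + 1)⁻¹, (k + 1)⁻¹ - 1}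

set_option maxHeartbeats 1600000 in
theorem stmt_3 (p : ℕ) [Fact p.Prime] (hp3 : 3 < p) :
    Omega p 1 = ({1, -2, -2⁻¹} : Finset (ZMod p)) ∧
    (Omega p 1).card = 3 ∧
    (∀ k : ZMod p, k ≠ 0 → k ≠ -1 →
      ((Omega p k).card = 3 ↔ Omega p k = Omega p 1)) := by
  have h2 : (2 : ZMod p) ≠ 0 := by
    intro h
    have : ((2:ℕ) : ZMod p) = 0 := by push_cast; exact h
    rw [ZMod.natCast_eq_zero_iff] at this
    have := Nat.le_of_dvd (by norm_num) this
    omega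
  have h3 : (3 : ZMod p) ≠ 0 := by
    intro h
    have : ((3:ℕ) : ZMod p) = 0 := by push_cast; exact h
    rw [ZMod.natCast_eq_zero_iff] at this
    have := Nat.le_of_dvd (by norm_num) this
    omega
  -- values for Omega p 1
  have v3 : (-1 - (1:ZMod p)⁻¹ : ZMod p) = -2 := by rw [inv_one]; ring
  have v1 : (-1 - 1 : ZMod p) = -2 := by ring
  have v2 : ((1:ZMod p))⁻¹ = 1 := inv_one
  have v4 : (-((1:ZMod p) + 1)⁻¹ : ZMod p) = -2⁻¹ := by norm_num
  have v5 : (((1:ZMod p) + 1)⁻¹ - 1 : ZMod p) = -2⁻¹ := by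
    rw [show ((1:ZMod p)+1) = 2 by norm_num]
    field_simp
    try ring
  have hO1 : Omega p 1 = ({1, -2, -2⁻¹} : Finset (ZMod p)) := by
    unfold Omega
    rw [v3, v4, v5, v1, v2]
    ext x; simp; try tauto
  -- pairwise distinctness of 1, -2, -2⁻¹
  have e12 : (1 : ZMod p) ≠ -2 := by intro h; exact h3 (by linear_combination h)
  have e13 : (1 : ZMod p) ≠ -2⁻¹ := by
    intro h; apply h3; field_simp at h; linear_combination h
  have e23 : (-2 : ZMod p) ≠ -2⁻¹ := by
    intro h; apply h3; field_simp at h; linear_combination -h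
  have hcard1 : (Omega p 1).card = 3 := by
    rw [hO1]
    rw [Finset.card_insert_of_notMem (by simp [e12, e13]),
      Finset.card_insert_of_notMem (by simp [e23]), Finset.card_singleton]
  refine ⟨hO1, hcard1, ?_⟩
  intro k hk0 hkm1
  have hm1 : k + 1 ≠ 0 := by intro h; exact hkm1 (by linear_combination h)
  constructor
  · intro hc
    by_cases hq : k ^ 2 + k + 1 = 0
    · -- orbit has size 2, contradiction
      exfalso
      have hb : k⁻¹ = -1 - k := inv_eq_of_mul_eq_one_right (by linear_combination -hq)
      have he : (k + 1)⁻¹ = -k := inv_eq_of_mul_eq_one_right (by linear_combination -hq)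
      have hsub : Omega p k ⊆ {k, -1 - k} := by
        intro x hx
        simp only [Omega, Finset.mem_insert, Finset.mem_singleton] at hx ⊢
        rcases hx with h | h | h | h | h | h
        · exact Or.inl h
        · exact Or.inr h
        · rw [hb] at h; exact Or.inr h
        · rw [hb] at h; exact Or.inl (by rw [h]; ring)
        · rw [he] at h; exact Or.inl (by rw [h]; ring)
        · rw [he] at h; exact Or.inr (by rw [h]; ring)
      have h2' : ({k, -1 - k} : Finset (ZMod p)).card ≤ 2 :=
        le_trans (Finset.card_insert_le _ _) (by simp)
      have := le_trans (Finset.card_le_card hsub) h2'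
      omega
    · by_cases hA : k = 1
      · subst hA; rfl
      by_cases hB : k = -2
      · subst hB
        rw [hO1]
        unfold Omega
        have w2 : ((-2 : ZMod p))⁻¹ = -2⁻¹ := inv_eq_of_mul_eq_one_right (by
          rw [neg_mul_neg]; exact mul_inv_cancel₀ h2)
        have w3 : (-1 - (-2 : ZMod p)⁻¹ : ZMod p) = -2⁻¹ := by
          rw [w2]
          apply mul_left_cancel₀ h2
          field_simp
          try ring
        have w1 : (-1 - (-2) : ZMod p) = 1 := by ring
        have w4 : ((-2 : ZMod p) + 1) = -1 := by ring
        have w5 : (-((-2 : ZMod p) + 1)⁻¹ : ZMod p) = 1 := by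
          rw [w4, inv_neg, inv_one, neg_neg]
        have w6 : (((-2 : ZMod p) + 1)⁻¹ - 1 : ZMod p) = -2 := by
          rw [w4, inv_neg, inv_one]; ring
        rw [w3, w1, w2, w5, w6]
        ext x; simp; try tauto
      by_cases hC : k = -2⁻¹
      · subst hC
        rw [hO1]
        unfold Omega
        have u0 : (-2⁻¹ : ZMod p) * (-2) = 1 := by
          rw [neg_mul_neg]; exact inv_mul_cancel₀ h2
        have w2 : ((-2⁻¹ : ZMod p))⁻¹ = -2 := inv_eq_of_mul_eq_one_right u0
        have w3 : (-1 - (-2⁻¹ : ZMod p)⁻¹ : ZMod p) = 1 := by rw [w2]; ring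
        have w1 : (-1 - (-2⁻¹) : ZMod p) = -2⁻¹ := by
          apply mul_left_cancel₀ h2
          field_simp
          try ring
        have u4 : ((-2⁻¹ : ZMod p) + 1) * 2 = 1 := by
          field_simp
          try ring
        have w4 : ((-2⁻¹ : ZMod p) + 1)⁻¹ = 2 := inv_eq_of_mul_eq_one_right u4
        have w5 : (-((-2⁻¹ : ZMod p) + 1)⁻¹ : ZMod p) = -2 := by rw [w4]
        have w6 : (((-2⁻¹ : ZMod p) + 1)⁻¹ - 1 : ZMod p) = 1 := by rw [w4]; ring
        rw [w3, w1, w5, w6, w2]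
        ext x; simp; try tauto
      · -- all six elements distinct: card = 6, contradiction
        exfalso
        have hC' : 2 * k + 1 ≠ 0 := by
          intro h; apply hC
          field_simp
          linear_combination h
        have hsq : k ^ 2 ≠ 1 := by
          intro h
          rcases mul_eq_zero.mp
              (show (k - 1) * (k + 1) = 0 by linear_combination h) with h' | h'
          · exact hA (by linear_combination h')
          · exact hm1 h'
        have hD : k ^ 2 + 2 * k ≠ 0 := by
          intro h
          rcases mul_eq_zero.mp
              (show k * (k + 2) = 0 by linear_combination h) with h' | h'
          · exact hk0 h'
          · exact hB (by linear_combination h')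
        have hcard6 : (Omega p k).card = 6 := by
          unfold Omega
          rw [Finset.card_insert_of_notMem, Finset.card_insert_of_notMem,
            Finset.card_insert_of_notMem, Finset.card_insert_of_notMem,
            Finset.card_insert_of_notMem, Finset.card_singleton]
          all_goals simp only [Finset.mem_insert, Finset.mem_singleton, not_or]
          all_goals repeat' apply And.intro
          all_goals
            intro h
            try field_simp at h
            first
            | exact hq (by linear_combination h)
            | exact hq (by linear_combination -h)
            | exact hC' (by linear_combination h)
            | exact hC' (by linear_combination -h)
            | exact hsq (by linear_combination h)
            | exact hsq (by linear_combination -h)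
            | exact hD (by linear_combination h)
            | exact hD (by linear_combination -h)
            | exact hA (by linear_combination h)
            | exact hA (by linear_combination -h)
            | exact hB (by linear_combination h)
            | exact hB (by linear_combination -h)
            | exact hk0 (by linear_combination h)
            | exact hk0 (by linear_combination -h)
            | exact hm1 (by linear_combination h)
            | exact hm1 (by linear_combination -h)
        omega
  · intro h; rw [h]; exact hcard1
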